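/- (Proposition 3.2) Let Â be a color class of an undirected graph G = (V,E) and let X be a partitive set of G with X ⊊ Ã (proper inclusion). Then there exists a vertex a ∈ Ã∖X such that (a,x) ∈ Â for every x ∈ X. -/

import Mathlib

open Set

namespace TransOrient

variable {V : Type*}

/-- `E` is the edge set of an undirected graph on the vertex type `V`:
an irreflexive and symmetric relation, given as a set of ordered pairs. -/
def IsGraph (E : Set (V × V)) : Prop :=
  (∀ a : V, (a, a) ∉ E) ∧ (∀ a b : V, (a, b) ∈ E ↔ (b, a) ∈ E)

/-- The forcing relation `Γ` on directed edges:
`(a,b) Γ (a',b')` iff (`a = a'` and `(b,b') ∉ E`) or (`b = b'` and `(a,a') ∉ E`). -/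
def Gamma (E : Set (V × V)) (e e' : V × V) : Prop :=
  e ∈ E ∧ e' ∈ E ∧
    ((e.1 = e'.1 ∧ (e.2, e'.2) ∉ E) ∨ (e.2 = e'.2 ∧ (e.1, e'.1) ∉ E))

/-- The implication classes of `G = (V,E)`: equivalence classes on `E` of
the reflexive-transitive closure of `Γ`. -/
def IsImplicationClass (E : Set (V × V)) (A : Set (V × V)) : Prop :=
  ∃ e ∈ E, A = {e' | Relation.ReflTransGen (Gamma E) e e'}

/-- `A⁻¹ = {(b,a) : (a,b) ∈ A}`. -/
def inv (A : Set (V × V)) : Set (V × V) := {p | (p.2, p.1) ∈ A}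

/-- The color class `Â = A ∪ A⁻¹` of an implication class `A`. -/
def hat (A : Set (V × V)) : Set (V × V) := A ∪ inv A

/-- `Ã`: the set of vertices incident to an edge of `A`. -/
def tilde (A : Set (V × V)) : Set V := {v | ∃ w, (v, w) ∈ A ∨ (w, v) ∈ A}

/-- A transitive orientation `E'` of a symmetric edge set `F`:
`E' ⊆ F`, `E' ∩ E'⁻¹ = ∅`, `E' ∪ E'⁻¹ = F` and `E'` is transitive. -/
def IsTransOrientation (F E' : Set (V × V)) : Prop :=
  E' ⊆ F ∧ E' ∩ inv E' = ∅ ∧ E' ∪ inv E' = F ∧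
    ∀ a b c : V, (a, b) ∈ E' → (b, c) ∈ E' → (a, c) ∈ E'

/-- `G` is a comparability graph if `E` admits a transitive orientation. -/
def IsComparability (E : Set (V × V)) : Prop :=
  ∃ E' : Set (V × V), IsTransOrientation E E'

/-- `E(X)`: the set of edges of `E` with both endpoints in `X`. -/
def edgesOn (E : Set (V × V)) (X : Set V) : Set (V × V) :=
  {p ∈ E | p.1 ∈ X ∧ p.2 ∈ X}

/-- `X` is a partitive set of `G = (V,E)`. -/
def IsPartitive (E : Set (V × V)) (X : Set V) : Prop :=
  ∀ a ∈ X, ∀ b ∈ X, ∀ c ∉ X, ((a, c) ∈ E ↔ (b, c) ∈ E)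

/-- `X` is a "strong" partitive set of `G = (V,E)`. -/
def IsStrongPartitive (E : Set (V × V)) (X : Set V) : Prop :=
  IsPartitive E X ∧
    ∀ Y : Set V, IsPartitive E Y → (Y ∩ X).Nonempty → X ⊆ Y ∨ Y ⊆ X

/-- `X` is a maximal "strong" partitive set of `G = (V,E)`: a strong partitive
set different from `V` which is maximal, for inclusion, among the strong
partitive sets different from `V`. -/
def IsMaxStrongPartitive (E : Set (V × V)) (X : Set V) : Prop :=
  IsStrongPartitive E X ∧ X ≠ Set.univ ∧
    ∀ Y : Set V, IsStrongPartitive E Y → Y ≠ Set.univ → X ⊆ Y → X = Y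

/-- `X` is a partitive set of the induced subgraph `G(W) = (W, E(W))`. -/
def IsPartitiveIn (E : Set (V × V)) (W : Set V) (X : Set V) : Prop :=
  X ⊆ W ∧ ∀ a ∈ X, ∀ b ∈ X, ∀ c ∈ W \ X,
    ((a, c) ∈ edgesOn E W ↔ (b, c) ∈ edgesOn E W)

/-- `X` is a "strong" partitive set of the induced subgraph `G(W)`. -/
def IsStrongPartitiveIn (E : Set (V × V)) (W : Set V) (X : Set V) : Prop :=
  IsPartitiveIn E W X ∧
    ∀ Y : Set V, IsPartitiveIn E W Y → (Y ∩ X).Nonempty → X ⊆ Y ∨ Y ⊆ X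

/-- `X` is a maximal "strong" partitive set of the induced subgraph `G(W)`. -/
def IsMaxStrongPartitiveIn (E : Set (V × V)) (W : Set V) (X : Set V) : Prop :=
  IsStrongPartitiveIn E W X ∧ X ≠ W ∧
    ∀ Y : Set V, IsStrongPartitiveIn E W Y → Y ≠ W → X ⊆ Y → X = Y

/-- Two directed edges lie in the same color class of `G = (V,E)`. -/
def SameColor (E : Set (V × V)) (e e' : V × V) : Prop :=
  ∃ A : Set (V × V), IsImplicationClass E A ∧ e ∈ hat A ∧ e' ∈ hat A

/-- A simplex of `G = (V,E)` given by its (finite, nonempty) vertex set `VS`: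
a complete induced subgraph whose edges, for distinct unordered pairs,
lie in distinct color classes of `G`. -/
def IsSimplex (E : Set (V × V)) (VS : Set V) : Prop :=
  VS.Finite ∧ VS.Nonempty ∧
    (∀ a ∈ VS, ∀ b ∈ VS, a ≠ b → (a, b) ∈ E) ∧
    (∀ a ∈ VS, ∀ b ∈ VS, ∀ c ∈ VS, ∀ d ∈ VS, a ≠ b → c ≠ d →
      SameColor E (a, b) (c, d) → (a = c ∧ b = d) ∨ (a = d ∧ b = c))

/-- The rank of a simplex on `r+1` vertices is `r`. -/
noncomputable def simplexRank (VS : Set V) : ℕ := VS.ncard - 1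

/-- A maximal simplex: its vertex set is not properly contained in the
vertex set of another simplex. -/
def IsMaxSimplex (E : Set (V × V)) (VS : Set V) : Prop :=
  IsSimplex E VS ∧ ∀ VS' : Set V, IsSimplex E VS' → VS ⊆ VS' → VS = VS'

/-- The multiplex `M(S)` generated by a simplex with vertex set `VS`:
the union of all color classes of `G` containing an edge of the simplex. -/
def multiplex (E : Set (V × V)) (VS : Set V) : Set (V × V) :=
  {e | ∃ A : Set (V × V), IsImplicationClass E A ∧ e ∈ hat A ∧
    ∃ a ∈ VS, ∃ b ∈ VS, a ≠ b ∧ (a, b) ∈ hat A}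

/-- A maximal multiplex of `G`: a multiplex generated by a maximal simplex. -/
def IsMaxMultiplex (E : Set (V × V)) (M : Set (V × V)) : Prop :=
  ∃ VS : Set V, IsMaxSimplex E VS ∧ M = multiplex E VS

/-- `P` is a partition of the set `W`. -/
def IsPartitionOf (W : Set V) (P : Set (Set V)) : Prop :=
  (∀ X ∈ P, X.Nonempty) ∧ ⋃₀ P = W ∧
    ∀ X ∈ P, ∀ Y ∈ P, X ≠ Y → X ∩ Y = ∅

/-- Adjacency in the quotient of the induced subgraph `G(W)` by a partition:
two distinct blocks are adjacent iff some pair of representatives is an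
edge of `E(W)`. -/
def quotAdj (E : Set (V × V)) (W : Set V) (X Y : Set V) : Prop :=
  X ≠ Y ∧ ∃ x ∈ X, ∃ y ∈ Y, (x, y) ∈ edgesOn E W

/-- A partitive set of an abstract graph with vertex set `W` and adjacency
relation `Adj`. -/
def IsPartitiveGen {α : Type*} (W : Set α) (Adj : α → α → Prop) (X : Set α) : Prop :=
  X ⊆ W ∧ ∀ a ∈ X, ∀ b ∈ X, ∀ c ∈ W \ X, (Adj a c ↔ Adj b c)

/-- An abstract graph `(W, Adj)` is indecomposable if all its partitive
sets are trivial. -/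
def IndecomposableGen {α : Type*} (W : Set α) (Adj : α → α → Prop) : Prop :=
  ∀ X : Set α, IsPartitiveGen W Adj X → X.Subsingleton ∨ X = W

/-- An isomorphism between the graphs `(Vα, Aα)` and `(Vβ, Aβ)`:
a bijection of the vertex sets preserving adjacency in both directions. -/
def GraphIso {α β : Type*} (Vα : Set α) (Aα : α → α → Prop)
    (Vβ : Set β) (Aβ : β → β → Prop) : Prop :=
  ∃ f : α → β, Set.BijOn f Vα Vβ ∧
    ∀ a ∈ Vα, ∀ b ∈ Vα, (Aα a b ↔ Aβ (f a) (f b))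

/-- `(V', E')` is a subgraph of the induced subgraph `G(W)` of `G = (V,E)`. -/
def IsSubgraphOf (E : Set (V × V)) (W : Set V) (V' : Set V) (E' : Set (V × V)) : Prop :=
  V' ⊆ W ∧ E' ⊆ edgesOn E W ∧ (∀ e ∈ E', e.1 ∈ V' ∧ e.2 ∈ V') ∧
    (∀ a b : V, (a, b) ∈ E' ↔ (b, a) ∈ E')

end TransOrient

section Aux

open TransOrient

variable {V : Type*} {E A : Set (V × V)}

private lemma gamma_symm (hG : IsGraph E) : Symmetric (Gamma E) := by
  rintro e e' ⟨he, he', h⟩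
  refine ⟨he', he, ?_⟩
  rcases h with ⟨h1, h2⟩ | ⟨h1, h2⟩
  · exact Or.inl ⟨h1.symm, fun hc => h2 ((hG.2 _ _).mp hc)⟩
  · exact Or.inr ⟨h1.symm, fun hc => h2 ((hG.2 _ _).mp hc)⟩

private lemma mem_of_rtg (hA : IsImplicationClass E A) {e f : V × V}
    (he : e ∈ A) (h : Relation.ReflTransGen (Gamma E) e f) : f ∈ A := by
  obtain ⟨e0, _, rfl⟩ := hA
  exact Relation.ReflTransGen.trans he h

private lemma classSubE (hA : IsImplicationClass E A) : A ⊆ E := by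
  obtain ⟨e0, he0, rfl⟩ := hA
  intro e he
  simp only [Set.mem_setOf_eq] at he
  induction he with
  | refl => exact he0
  | tail _ h _ => exact h.2.1

private lemma conn (hG : IsGraph E) (hA : IsImplicationClass E A) {e f : V × V}
    (he : e ∈ A) (hf : f ∈ A) : Relation.ReflTransGen (Gamma E) e f := by
  obtain ⟨e0, _, rfl⟩ := hA
  exact Relation.ReflTransGen.trans
    (haveI : Std.Symm (Gamma E) := ⟨fun _ _ h => gamma_symm hG h⟩; Std.Symm.symm _ _ he) hf

private lemma memHat_left {u v : V} (h : (u, v) ∈ A) : (u, v) ∈ hat A :=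
  Set.mem_union_left _ h

private lemma memHat_right {u v : V} (h : (v, u) ∈ A) : (u, v) ∈ hat A :=
  Set.mem_union_right _ h

private lemma hat_symm {u v : V} (h : (u, v) ∈ hat A) : (v, u) ∈ hat A := by
  rcases h with h | h
  · exact memHat_right h
  · exact memHat_left h

/-- Key one-step lemma: from `(u,v) ∈ Â`, any edge `(u,w)` with `(v,w) ∉ E`
also lies in `Â`. -/
private lemma hatStep (hG : IsGraph E) (hA : IsImplicationClass E A) {u v w : V}
    (h : (u, v) ∈ hat A) (hw : (u, w) ∈ E) (hvw : (v, w) ∉ E) : (u, w) ∈ hat A := by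
  rcases h with h | h
  · exact memHat_left
      (mem_of_rtg hA h (Relation.ReflTransGen.single
        ⟨classSubE hA h, hw, Or.inl ⟨rfl, hvw⟩⟩))
  · exact memHat_right
      (mem_of_rtg hA h (Relation.ReflTransGen.single
        ⟨classSubE hA h, (hG.2 u w).mp hw, Or.inr ⟨rfl, hvw⟩⟩))

end Aux

open TransOrient in
/-- **(Proposition 3.2)** If `Â` is a color class and `X` a partitive set with
`X ⊊ Ã`, then some `a ∈ Ã ∖ X` satisfies `(a,x) ∈ Â` for every `x ∈ X`. -/
theorem exists_vertex_color_related_to_partitive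
    {V : Type*} (E : Set (V × V)) (hG : IsGraph E)
    (A : Set (V × V)) (hA : IsImplicationClass E A)
    (X : Set V) (hX : IsPartitive E X) (hss : X ⊂ tilde A) :
    ∃ a ∈ tilde A \ X, ∀ x ∈ X, (a, x) ∈ hat A := by
  classical
  obtain ⟨a0, ha0T, ha0X⟩ := Set.exists_of_ssubset hss
  -- every vertex outside X is adjacent to all of X or to none of it
  have hfull : ∀ c ∉ X, ∀ x1 ∈ X, (x1, c) ∈ E → ∀ x2 ∈ X, (c, x2) ∈ E := by
    intro c hc x1 hx1 h1 x2 hx2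
    exact (hG.2 x2 c).mp ((hX x1 hx1 x2 hx2 c hc).mp h1)
  have hnull : ∀ c ∉ X, ∀ x1 ∈ X, (x1, c) ∉ E → ∀ x2 ∈ X, (c, x2) ∉ E := by
    intro c hc x1 hx1 h1 x2 hx2 hcon
    exact h1 ((hX x1 hx1 x2 hx2 c hc).mpr ((hG.2 c x2).mp hcon))
  obtain ⟨w0, hw0⟩ := ha0T
  -- no edge of A has both endpoints inside X
  have hni : ∀ e ∈ A, ¬(e.1 ∈ X ∧ e.2 ∈ X) := by
    rintro e he ⟨h1, h2⟩
    have hstep : ∀ g, Relation.ReflTransGen (Gamma E) e g → g.1 ∈ X ∧ g.2 ∈ X := by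
      intro g hg
      induction hg with
      | refl => exact ⟨h1, h2⟩
      | @tail c g hc hΓ ih =>
        obtain ⟨hcE, hgE, hd⟩ := hΓ
        rcases hd with ⟨heq, hne'⟩ | ⟨heq, hne'⟩
        · refine ⟨heq ▸ ih.1, ?_⟩
          by_contra hg2
          exact hne' ((hX g.1 (heq ▸ ih.1) c.2 ih.2 g.2 hg2).mp hgE)
        · refine ⟨?_, heq ▸ ih.2⟩
          by_contra hg1
          exact hne' ((hX g.2 (heq ▸ ih.2) c.1 ih.1 g.1 hg1).mp ((hG.2 g.1 g.2).mp hgE))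
    rcases hw0 with h | h
    · exact ha0X (hstep (a0, w0) (conn hG hA he h)).1
    · exact ha0X (hstep (w0, a0) (conn hG hA he h)).2
  -- main chain argument
  have main : ∀ a, a ∉ X → ∀ ex ∈ A, ((ex.1 ∈ X ∧ ex.2 = a) ∨ (ex.1 = a ∧ ex.2 ∈ X)) →
      (∃ α ∈ tilde A \ X, ∀ x' ∈ X, (α, x') ∈ hat A) ∨ (∀ x' ∈ X, (a, x') ∈ hat A) := by
    intro a haX ex hexA hexC
    by_cases hs : ∃ α ∈ tilde A \ X, ∀ x' ∈ X, (α, x') ∈ hat A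
    · exact Or.inl hs
    right
    have key : ∀ g, Relation.ReflTransGen (Gamma E) ex g →
        g ∈ A ∧ ((g.1 ∈ X ∧ g.2 ∉ X ∧ (∀ x' ∈ X, (g.2, x') ∈ hat A → (a, x') ∈ hat A)) ∨
                 (g.1 ∉ X ∧ g.2 ∈ X ∧ (∀ x' ∈ X, (g.1, x') ∈ hat A → (a, x') ∈ hat A))) := by
      intro g hg
      induction hg with
      | refl =>
        refine ⟨hexA, ?_⟩
        rcases hexC with ⟨h1, h2⟩ | ⟨h1, h2⟩
        · exact Or.inl ⟨h1, by rw [h2]; exact haX, fun x' _ h => by rw [h2] at h; exact h⟩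
        · exact Or.inr ⟨by rw [h1]; exact haX, h2, fun x' _ h => by rw [h1] at h; exact h⟩
      | @tail c g hc hΓ ih =>
        obtain ⟨hcA, hinv⟩ := ih
        have hgA : g ∈ A := mem_of_rtg hA hcA (Relation.ReflTransGen.single hΓ)
        obtain ⟨hcE, hgE, hd⟩ := hΓ
        refine ⟨hgA, ?_⟩
        rcases hinv with ⟨h1, h2, himp⟩ | ⟨h1, h2, himp⟩
        · -- c.1 ∈ X, c.2 ∉ X
          rcases hd with ⟨heq, hne'⟩ | ⟨heq, hne'⟩
          · -- g.1 = c.1 ∈ X, (c.2, g.2) ∉ E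
            have hg1 : g.1 ∈ X := heq ▸ h1
            have hg2 : g.2 ∉ X := fun h => hni g hgA ⟨hg1, h⟩
            left
            refine ⟨hg1, hg2, ?_⟩
            intro x' hx' hh
            apply himp x' hx'
            have hx'c2E : (x', c.2) ∈ E := (hG.2 c.2 x').mp (hfull c.2 h2 c.1 h1 hcE x' hx')
            have h3 : (x', c.2) ∈ hat A :=
              hatStep hG hA (hat_symm hh) hx'c2E (fun hcon => hne' ((hG.2 g.2 c.2).mp hcon))
            exact hat_symm h3
          · -- c.2 = g.2, (c.1, g.1) ∉ E
            by_cases hg1 : g.1 ∈ X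
            · left
              refine ⟨hg1, by rw [← heq]; exact h2, ?_⟩
              intro x' hx' hh
              exact himp x' hx' (by rwa [heq])
            · -- g.1 is null, c.2 is full : success
              exfalso; apply hs
              refine ⟨c.2, ⟨⟨c.1, Or.inr ?_⟩, h2⟩, ?_⟩
              · exact hcA
              intro x' hx'
              have hcf : (c.2, g.1) ∈ hat A := by
                have hgA' : (g.1, c.2) ∈ A := by rw [heq]; exact hgA
                exact hat_symm (memHat_left hgA')
              have hcx'E : (c.2, x') ∈ E := hfull c.2 h2 c.1 h1 hcE x' hx'
              have hg1x' : (g.1, x') ∉ E := hnull g.1 hg1 c.1 h1 hne' x' hx'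
              exact hatStep hG hA hcf hcx'E hg1x'
        · -- c.1 ∉ X, c.2 ∈ X
          rcases hd with ⟨heq, hne'⟩ | ⟨heq, hne'⟩
          · -- g.1 = c.1 ∉ X, (c.2, g.2) ∉ E
            by_cases hg2 : g.2 ∈ X
            · right
              refine ⟨by rw [← heq]; exact h1, hg2, ?_⟩
              intro x' hx' hh
              exact himp x' hx' (by rwa [heq])
            · -- g.2 is null, c.1 is full : success
              exfalso; apply hs
              refine ⟨c.1, ⟨⟨c.2, Or.inl hcA⟩, h1⟩, ?_⟩
              intro x' hx'
              have hcf : (c.1, g.2) ∈ hat A := by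
                have hgA' : (c.1, g.2) ∈ A := by rw [heq]; exact hgA
                exact memHat_left hgA'
              have hcx'E : (c.1, x') ∈ E :=
                hfull c.1 h1 c.2 h2 ((hG.2 c.1 c.2).mp hcE) x' hx'
              have hg2x' : (g.2, x') ∉ E := hnull g.2 hg2 c.2 h2 hne' x' hx'
              exact hatStep hG hA hcf hcx'E hg2x'
          · -- c.2 = g.2 ∈ X, (c.1, g.1) ∉ E
            have hg2 : g.2 ∈ X := heq ▸ h2
            have hg1 : g.1 ∉ X := fun h => hni g hgA ⟨h, hg2⟩
            right
            refine ⟨hg1, hg2, ?_⟩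
            intro x' hx' hh
            apply himp x' hx'
            have hx'c1E : (x', c.1) ∈ E :=
              (hG.2 c.1 x').mp (hfull c.1 h1 c.2 h2 ((hG.2 c.1 c.2).mp hcE) x' hx')
            have h3 : (x', c.1) ∈ hat A :=
              hatStep hG hA (hat_symm hh) hx'c1E (fun hcon => hne' ((hG.2 g.1 c.1).mp hcon))
            exact hat_symm h3
    -- conclude `main`
    intro x' hx'
    obtain ⟨w, hw⟩ := hss.subset hx'
    rcases hw with hw | hw
    · obtain ⟨_, hinv⟩ := key (x', w) (conn hG hA hexA hw)
      rcases hinv with ⟨_, _, himp⟩ | ⟨h1, _, _⟩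
      · exact himp x' hx' (hat_symm (memHat_left hw))
      · exact absurd hx' h1
    · obtain ⟨_, hinv⟩ := key (w, x') (conn hG hA hexA hw)
      rcases hinv with ⟨_, h2, _⟩ | ⟨_, _, himp⟩
      · exact absurd hx' h2
      · exact himp x' hx' (memHat_left hw)
  -- final assembly
  rcases X.eq_empty_or_nonempty with hXe | ⟨x, hx⟩
  · exact ⟨a0, ⟨⟨w0, hw0⟩, ha0X⟩, by simp [hXe]⟩
  · obtain ⟨w, hw⟩ := hss.subset hx
    rcases hw with hw | hw
    · have hwX : w ∉ X := fun h => hni (x, w) hw ⟨hx, h⟩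
      rcases main w hwX (x, w) hw (Or.inl ⟨hx, rfl⟩) with ⟨α, hα, h⟩ | h
      · exact ⟨α, hα, h⟩
      · exact ⟨w, ⟨⟨x, Or.inr hw⟩, hwX⟩, h⟩
    · have hwX : w ∉ X := fun h => hni (w, x) hw ⟨h, hx⟩
      rcases main w hwX (w, x) hw (Or.inr ⟨rfl, hx⟩) with ⟨α, hα, h⟩ | h
      · exact ⟨α, hα, h⟩
      · exact ⟨w, ⟨⟨x, Or.inl hw⟩, hwX⟩, h⟩
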